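/- Let 0 < α < 1, n ≥ 3, j even with 2 ≤ j ≤ n, and let θ be the unique solution in ((j-1)π/n, jπ/n) of nx = (j-1)π + η_α(x). Then |θ - ((j-1)π/n + η_α((j-1)π/n)/n)| ≤ π·K₁(α)/n², where K₁(α) = max{α/(1-α), (1-α)/α}. -/

import Mathlib

open Real Set

/-- First-order approximation of the solution `θ` of the main equation:
`|θ - ((j-1)π/n + η_α((j-1)π/n)/n)| ≤ π K₁(α)/n²`. -/
theorem theta_first_approximation (α : ℝ) (hα0 : 0 < α) (hα1 : α < 1)
    (n : ℕ) (hn : 3 ≤ n) (j : ℕ) (hj2 : 2 ≤ j) (hjn : j ≤ n) (hje : Even j)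
    (η : ℝ → ℝ)
    (hη0 : η 0 = π) (hηπ : η π = 0)
    (hη : ∀ x ∈ Ioo (0 : ℝ) π, η x = 2 * arctan ((α / (1 - α)) * Real.cot (x / 2)))
    (θ : ℝ) (hθmem : θ ∈ Ioo ((j - 1) * π / n) (j * π / n))
    (hθeq : n * θ = (j - 1) * π + η θ) :
    |θ - ((j - 1) * π / n + η ((j - 1) * π / n) / n)|
      ≤ π * max (α / (1 - α)) ((1 - α) / α) / n ^ 2 := by
  have h1α : (0:ℝ) < 1 - α := by linarith
  set κ := α / (1 - α) with hκdef
  set K := max (α / (1 - α)) ((1 - α) / α) with hKdef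
  have hκ : 0 < κ := div_pos hα0 h1α
  have hKκ : κ ≤ K := le_max_left _ _
  have hinv : (1 - α) / α = 1 / κ := by
    rw [hκdef, one_div, inv_div]
  have hKκ1 : 1 ≤ K * κ := by
    have h : 1 / κ ≤ K := hinv ▸ le_max_right _ _
    calc (1:ℝ) = (1/κ) * κ := by field_simp
    _ ≤ K * κ := by gcongr
  have hK0 : 0 < K := lt_of_lt_of_le hκ hKκ
  clear_value κ K
  clear hκdef hKdef hinv
  have hn0 : (0:ℝ) < n := by positivity
  have hj1 : (1:ℝ) ≤ (j:ℝ) - 1 := by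
    have h2j : (2:ℝ) ≤ (j:ℝ) := by exact_mod_cast hj2
    linarith
  have hjnR : (j:ℝ) ≤ n := by exact_mod_cast hjn
  have hπ := Real.pi_pos
  set a := ((j:ℝ) - 1) * π / n with hadef
  have ha0 : 0 < a := by positivity
  have haπ : a < π := by
    rw [hadef, div_lt_iff₀ hn0]
    nlinarith
  obtain ⟨hθl, hθu⟩ := hθmem
  have hθ0 : 0 < θ := lt_trans ha0 hθl
  have hθπ' : θ < π := by
    have : (j:ℝ) * π / n ≤ π := by
      rw [div_le_iff₀ hn0]; nlinarith
    linarith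
  -- the model function
  set f : ℝ → ℝ := fun x => 2 * arctan (κ * Real.cot (x / 2)) with hfdef
  set f' : ℝ → ℝ := fun x =>
    -(κ / (Real.sin (x/2) ^ 2 + κ ^ 2 * Real.cos (x/2) ^ 2)) with hf'def
  have hderiv : ∀ x ∈ Ioo (0:ℝ) π, HasDerivWithinAt f (f' x) (Ioo (0:ℝ) π) x := by
    intro x hx
    obtain ⟨hx0, hxπ⟩ := hx
    have hs : 0 < Real.sin (x / 2) := by
      apply Real.sin_pos_of_pos_of_lt_pi <;> linarith
    have hsne : Real.sin (x / 2) ≠ 0 := ne_of_gt hs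
    have hD : 0 < Real.sin (x/2) ^ 2 + κ ^ 2 * Real.cos (x/2) ^ 2 := by positivity
    have hDne : Real.sin (x/2) ^ 2 + κ ^ 2 * Real.cos (x/2) ^ 2 ≠ 0 := ne_of_gt hD
    have hpy := Real.sin_sq_add_cos_sq (x/2)
    have hcot : ∀ y : ℝ, Real.cot y = Real.cos y / Real.sin y := fun y =>
      Real.cot_eq_cos_div_sin y
    have h2 : HasDerivAt (fun y : ℝ => y / 2) (1/2) x := by
      simpa using (hasDerivAt_id x).div_const 2
    have hcos : HasDerivAt (fun y : ℝ => Real.cos (y/2)) (-Real.sin (x/2) * (1/2)) x :=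
      ((Real.hasDerivAt_cos (x/2)).comp x h2 :)
    have hsin : HasDerivAt (fun y : ℝ => Real.sin (y/2)) (Real.cos (x/2) * (1/2)) x :=
      ((Real.hasDerivAt_sin (x/2)).comp x h2 :)
    have hdiv : HasDerivAt (fun y : ℝ => Real.cos (y/2) / Real.sin (y/2))
        ((-Real.sin (x/2) * (1/2) * Real.sin (x/2) -
          Real.cos (x/2) * (Real.cos (x/2) * (1/2))) / Real.sin (x/2) ^ 2) x :=
      hcos.div hsin hsne
    have hmul : HasDerivAt (fun y : ℝ => κ * (Real.cos (y/2) / Real.sin (y/2)))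
        (κ * ((-Real.sin (x/2) * (1/2) * Real.sin (x/2) -
          Real.cos (x/2) * (Real.cos (x/2) * (1/2))) / Real.sin (x/2) ^ 2)) x :=
      hdiv.const_mul κ
    have harc : HasDerivAt (fun y : ℝ => 2 * arctan (κ * (Real.cos (y/2) / Real.sin (y/2))))
        (2 * ((1 / (1 + (κ * (Real.cos (x/2) / Real.sin (x/2))) ^ 2)) *
          (κ * ((-Real.sin (x/2) * (1/2) * Real.sin (x/2) -
          Real.cos (x/2) * (Real.cos (x/2) * (1/2))) / Real.sin (x/2) ^ 2)))) x :=
      (((Real.hasDerivAt_arctan _).comp x hmul).const_mul 2)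
    have hfeq : f = fun y : ℝ => 2 * arctan (κ * (Real.cos (y/2) / Real.sin (y/2))) := by
      funext y; simp only [hfdef]; rw [hcot (y/2)]
    have hder : HasDerivAt f (2 * ((1 / (1 + (κ * (Real.cos (x/2) / Real.sin (x/2))) ^ 2)) *
          (κ * ((-Real.sin (x/2) * (1/2) * Real.sin (x/2) -
          Real.cos (x/2) * (Real.cos (x/2) * (1/2))) / Real.sin (x/2) ^ 2)))) x := by
      rw [hfeq]; exact harc
    have hnum : -Real.sin (x/2) * (1/2) * Real.sin (x/2) -
        Real.cos (x/2) * (Real.cos (x/2) * (1/2)) = -(1/2) := by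
      linear_combination (-(1:ℝ)/2) * hpy
    have hden : 1 + (κ * (Real.cos (x/2) / Real.sin (x/2))) ^ 2 =
        (Real.sin (x/2) ^ 2 + κ ^ 2 * Real.cos (x/2) ^ 2) / Real.sin (x/2) ^ 2 := by
      field_simp
    have heq : (2 * ((1 / (1 + (κ * (Real.cos (x/2) / Real.sin (x/2))) ^ 2)) *
          (κ * ((-Real.sin (x/2) * (1/2) * Real.sin (x/2) -
          Real.cos (x/2) * (Real.cos (x/2) * (1/2))) / Real.sin (x/2) ^ 2)))) = f' x := by
      rw [hnum, hden, hf'def]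
      field_simp
    rw [heq] at hder
    exact hder.hasDerivWithinAt
  have hbound : ∀ x ∈ Ioo (0:ℝ) π, ‖f' x‖ ≤ K := by
    intro x hx
    have hs : 0 < Real.sin (x / 2) := by
      apply Real.sin_pos_of_pos_of_lt_pi
      · linarith [hx.1]
      · linarith [hx.2, hπ]
    have hpy := Real.sin_sq_add_cos_sq (x/2)
    have hD : 0 < Real.sin (x/2) ^ 2 + κ ^ 2 * Real.cos (x/2) ^ 2 := by positivity
    rw [hf'def]
    simp only []
    rw [Real.norm_eq_abs, abs_neg, abs_of_pos (div_pos hκ hD), div_le_iff₀ hD]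
    have h1 : κ * Real.sin (x/2) ^ 2 ≤ K * Real.sin (x/2) ^ 2 :=
      mul_le_mul_of_nonneg_right hKκ (sq_nonneg _)
    have h2 : κ ≤ K * κ ^ 2 := by nlinarith [hKκ1, hκ]
    have h3 : κ * Real.cos (x/2) ^ 2 ≤ K * κ ^ 2 * Real.cos (x/2) ^ 2 :=
      mul_le_mul_of_nonneg_right h2 (sq_nonneg _)
    have h4 : K * (Real.sin (x/2) ^ 2 + κ ^ 2 * Real.cos (x/2) ^ 2)
        = K * Real.sin (x/2) ^ 2 + K * κ ^ 2 * Real.cos (x/2) ^ 2 := by ring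
    have h5 : κ * Real.sin (x/2) ^ 2 + κ * Real.cos (x/2) ^ 2 = κ := by
      linear_combination κ * hpy
    linarith [h1, h3, h4, h5]
  have haIoo : a ∈ Ioo (0:ℝ) π := ⟨ha0, haπ⟩
  have hθIoo : θ ∈ Ioo (0:ℝ) π := ⟨hθ0, hθπ'⟩
  have hlip := (convex_Ioo (0:ℝ) π).norm_image_sub_le_of_norm_hasDerivWithin_le
    hderiv hbound haIoo hθIoo
  have hηθ : η θ = f θ := by rw [hη θ hθIoo, hfdef]
  have hηa : η a = f a := by rw [hη a haIoo, hfdef]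
  have hθform : θ = a + η θ / n := by
    rw [hadef]
    field_simp
    linarith [hθeq]
  have hdist : |θ - a| ≤ π / n := by
    rw [abs_of_pos (by linarith : 0 < θ - a)]
    have h : (j:ℝ) * π / n = a + π / n := by rw [hadef]; ring
    rw [h] at hθu
    linarith
  have key : |θ - (a + η a / n)| = |f θ - f a| / n := by
    nth_rewrite 1 [hθform]
    rw [hηθ, hηa,
      show a + f θ / n - (a + f a / n) = (f θ - f a) / n by ring,
      abs_div, abs_of_pos hn0]
  rw [key]
  have h1 : |f θ - f a| ≤ K * (π / n) := by
    calc |f θ - f a| ≤ K * ‖θ - a‖ := hlip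
    _ = K * |θ - a| := by rw [Real.norm_eq_abs]
    _ ≤ K * (π / n) := by gcongr
  calc |f θ - f a| / n ≤ K * (π / n) / n := by gcongr
  _ = π * K / n ^ 2 := by field_simp
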